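/- Let L be a complete lattice of finite height n with a complete join-homomorphism λ : L → L satisfying conditions JNB1–JNB3. If λ is nilpotent and w = λ(⊤), then the interval [⊥, w] is a complete lattice of height at most n − 1, the restriction λ* of λ to [⊥, w] maps [⊥, w] into itself, is a complete join-homomorphism, and the pair ([⊥, w], λ*) again satisfies JNB1–JNB3. -/

import Mathlib

/-- If `(L, lam)` satisfies JNB1–JNB3 with `L` of height at most `n` and `lam`
a nilpotent complete join-homomorphism, then with `w = lam ⊤` the interval
`[⊥, w]` is mapped into itself by `lam`, the interval (a complete lattice)
has height at most `n - 1`, and any restriction `lam*` of `lam` to `[⊥, w]`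
is again a complete join-homomorphism satisfying JNB1–JNB3. -/
theorem stmt_15 {L : Type*} [CompleteLattice L] (lam : L → L)
    (hhom : ∀ S : Set L, lam (sSup S) = sSup (lam '' S))
    (n : ℕ) (hn : 1 ≤ n)
    (hheight : ∀ l : List L, l.Chain' (· < ·) → l.length ≤ n + 1)
    (hJNB1a : ∀ x : L, ∃ s : Finset L, (∀ b ∈ s, IsAtom b) ∧ x = s.sup id)
    (hJNB2 : ∀ x y : L, x ≤ y → lam x = lam y →
      ∃ u : L, y = x ⊔ u ∧ lam u = ⊥)
    (hJNB3 : ∀ x y : L, y ≤ lam x → ∃ u : L, u ≤ x ∧ lam u = y)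
    (hnilp : ∃ m : ℕ, 1 ≤ m ∧ lam^[m] = fun _ => (⊥ : L))
    (w : L) (hw : w = lam ⊤) :
    -- `lam` maps the interval `[⊥, w]` into itself
    (∀ x : L, x ≤ w → lam x ≤ w) ∧
    -- the interval has height at most `n - 1`
    (∀ l : List (Set.Iic w), l.Chain' (· < ·) → l.length ≤ (n - 1) + 1) ∧
    -- any restriction of `lam` to the interval is a complete
    -- join-homomorphism satisfying JNB1, JNB2 and JNB3
    (∀ lam' : Set.Iic w → Set.Iic w, (∀ x : Set.Iic w, (lam' x : L) = lam x) →
      (∀ S : Set (Set.Iic w), lam' (sSup S) = sSup (lam' '' S)) ∧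
      (∀ x : Set.Iic w, ∃ s : Finset (Set.Iic w),
        (∀ b ∈ s, IsAtom b) ∧ x = s.sup id) ∧
      (∀ x y : Set.Iic w, x ≤ y → lam' x = lam' y →
        ∃ u : Set.Iic w, y = x ⊔ u ∧ lam' u = ⊥) ∧
      (∀ x y : Set.Iic w, y ≤ lam' x → ∃ u : Set.Iic w, u ≤ x ∧ lam' u = y)) := by
  -- lam is monotone
  have hmono : Monotone lam := by
    intro a b hab
    have h2 : lam (sSup {a, b}) = sSup (lam '' {a, b}) := hhom _
    simp only [sSup_insert, sSup_singleton, Set.image_insert_eq, Set.image_singleton,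
      sup_eq_right.2 hab] at h2
    rw [h2]; exact le_sup_left
  have hle : ∀ x : L, lam x ≤ w := fun x => hw ▸ hmono le_top
  have part1 : ∀ x : L, x ≤ w → lam x ≤ w := fun x _ => hle x
  refine ⟨part1, ?_, ?_⟩
  · -- height bound
    have hne : (1:ℕ) ≤ (n-1) + 1 := Nat.le_add_left 1 _
    by_cases htriv : (⊤ : L) = ⊥
    · -- L is trivial: any strict chain has length ≤ 1
      intro l hl
      rcases l with _ | ⟨a, _ | ⟨b, t⟩⟩
      · simp
      · simpa using hne
      · exfalso
        have hab : a < b := (List.isChain_cons_cons.1 hl).1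
        have : (a : L) < b := hab
        have : (a : L) = b := by
          have := le_bot_iff.1 (htriv ▸ le_top (a := (a:L)))
          have hb := le_bot_iff.1 (htriv ▸ le_top (a := (b:L)))
          rw [this, hb]
        exact absurd this (ne_of_lt ‹(a:L) < (b:L)›)
    · have hwlt : w < ⊤ := by
        rcases lt_or_eq_of_le (le_top (a := w)) with h | h
        · exact h
        · exfalso
          obtain ⟨m, hm1, hm2⟩ := hnilp
          have hfix : ∀ k, lam^[k] ⊤ = ⊤ := by
            intro k
            induction k with
            | zero => rfl
            | succ k ih => rw [Function.iterate_succ_apply', ih, ← hw, h]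
          have := hfix m
          rw [hm2] at this
          exact htriv this.symm
      intro l hl
      rcases l with _ | ⟨a, t⟩
      · simp
      · set l' : List (Set.Iic w) := a :: t with hl'
        have hmap : (l'.map (fun a : Set.Iic w => (a : L)) : List L).Chain' (· < ·) := by
          show List.IsChain _ _
          rw [List.isChain_map]
          exact hl
        have happ : ((l'.map ((fun a : Set.Iic w => (a : L)) : Set.Iic w → L)) ++ [⊤]).Chain' (· < ·) := by
          show List.IsChain _ _
          rw [List.isChain_append]
          refine ⟨hmap, List.isChain_singleton _, ?_⟩
          intro x hx y hy
          simp only [List.head?_cons, Option.mem_def, Option.some.injEq] at hy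
          subst hy
          have hxm : x ∈ l'.map ((fun a : Set.Iic w => (a : L)) : Set.Iic w → L) := List.mem_of_mem_getLast? hx
          obtain ⟨z, _, rfl⟩ := List.mem_map.1 hxm
          exact lt_of_le_of_lt z.2 hwlt
        have := hheight _ happ
        simp only [List.length_append, List.length_map, List.length_singleton] at this
        omega
  · intro lam' hres
    classical
    refine ⟨?_, ?_, ?_, ?_⟩
    · -- sSup preservation
      intro S
      apply Subtype.ext
      rw [hres]
      have h1 : ((sSup S : Set.Iic w) : L) = sSup ((↑) '' S) := rfl
      have h2 : ((sSup (lam' '' S) : Set.Iic w) : L) = sSup ((↑) '' (lam' '' S)) := rfl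
      rw [h1, h2, hhom, Set.image_image, Set.image_image]
      exact congrArg sSup (Set.image_congr' (fun x => (hres x).symm))
    · -- JNB1
      intro x
      obtain ⟨s, hs, hsup⟩ := hJNB1a (x : L)
      have hmem : ∀ b ∈ s, b ≤ w := by
        intro b hb
        calc b ≤ s.sup id := Finset.le_sup (f := id) hb
        _ = x := hsup.symm
        _ ≤ w := x.2
      refine ⟨s.attach.image (fun b => (⟨b.1, hmem b.1 b.2⟩ : Set.Iic w)), ?_, ?_⟩
      · intro b hb
        simp only [Finset.mem_image, Finset.mem_attach, true_and] at hb
        obtain ⟨c, rfl⟩ := hb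
        have hatom := hs c.1 c.2
        constructor
        · intro h
          exact hatom.1 (congrArg Subtype.val h)
        · intro d hd
          have : (d : L) < c.1 := hd
          exact Subtype.ext (hatom.2 _ this)
      · apply Subtype.ext
        have hcoesup : ∀ (t : Finset (Set.Iic w)),
            ((t.sup id : Set.Iic w) : L) = t.sup (fun b => (b : L)) := by
          intro t
          exact Finset.comp_sup_eq_sup_comp (fun (b : Set.Iic w) => (b : L))
            (fun _ _ => rfl) rfl
        rw [hcoesup, Finset.sup_image]
        have : (s.attach.sup ((fun b : Set.Iic w => (b : L)) ∘
            (fun b => (⟨b.1, hmem b.1 b.2⟩ : Set.Iic w)))) = s.attach.sup (fun b => b.1) := rfl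
        rw [this]
        exact hsup.trans (Finset.sup_attach s id).symm
    · -- JNB2
      intro x y hxy heq
      have : lam (x : L) = lam (y : L) := by rw [← hres, ← hres, heq]
      obtain ⟨u, hu1, hu2⟩ := hJNB2 (x : L) (y : L) hxy this
      have huw : u ≤ w := le_trans (le_trans le_sup_right hu1.symm.le) y.2
      refine ⟨⟨u, huw⟩, Subtype.ext hu1, Subtype.ext ?_⟩
      rw [hres]
      exact hu2
    · -- JNB3
      intro x y hyx
      have : (y : L) ≤ lam (x : L) := by rw [← hres]; exact hyx
      obtain ⟨u, hu1, hu2⟩ := hJNB3 (x : L) (y : L) this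
      exact ⟨⟨u, le_trans hu1 x.2⟩, hu1, Subtype.ext (by rw [hres]; exact hu2)⟩
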